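/- For all real u > 0, 1 + u/2 + u^2/12 > u/(1 - e^{-u}). -/
import Mathlib

theorem stmt_1 : ∀ u : ℝ, 0 < u →
    1 + u / 2 + u ^ 2 / 12 > u / (1 - Real.exp (-u)) := by
  intro u hu
  have hlt : Real.exp (-u) < 1 := Real.exp_lt_one_iff.mpr (by linarith)
  have hpos : 0 < 1 - Real.exp (-u) := by linarith
  rw [gt_iff_lt, div_lt_iff₀ hpos]
  have hexp : 1 + u + u ^ 2 / 2 + u ^ 3 / 6 + u ^ 4 / 24 + u ^ 5 / 120 ≤ Real.exp u := by
    have h := Real.sum_le_exp_of_nonneg hu.le 6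
    simp [Finset.sum_range_succ, Nat.factorial] at h
    linarith
  have hinv : Real.exp (-u) = 1 / Real.exp u := by
    rw [Real.exp_neg]; ring
  have hepos : 0 < Real.exp u := Real.exp_pos u
  rw [hinv, show (1:ℝ) - 1 / Real.exp u = (Real.exp u - 1) / Real.exp u from by
    field_simp, ← mul_div_assoc, lt_div_iff₀ hepos]
  have hA : (0:ℝ) ≤ 1 - u / 2 + u ^ 2 / 12 := by nlinarith [sq_nonneg (u - 3)]
  have key := mul_le_mul_of_nonneg_left hexp hA
  nlinarith [key, mul_nonneg (pow_pos hu 5).le (sq_nonneg (u - 1)), pow_pos hu 6,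
    pow_pos hu 5]
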